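/- Let p be an odd prime and let N be a subgroup of PGL₂(𝔽_p) isomorphic to the Klein four-group C₂ × C₂. (a) If N ⊆ PSL₂(𝔽_p), then every element of order 2 in N lies in the image in PGL₂(𝔽_p) of a Cartan subgroup of GL₂(𝔽_p) whose normalizer has image containing N; moreover these Cartan subgroups can be taken split if p ≡ 1 (mod 4) and non-split if p ≡ 3 (mod 4). (b) If N ⊄ PSL₂(𝔽_p), then exactly one of the three elements of order 2 in N lies in PSL₂(𝔽_p); if p ≡ 1 (mod 4), that element lies in the image of a split Cartan subgroup and the other two lie in images of non-split Cartan subgroups, while if p ≡ 3 (mod 4), that element lies in the image of a non-split Cartan subgroup and the other two lie in images of split Cartan subgroups. -/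

import Mathlib

open Matrix

/-- The subgroup of invertible diagonal matrices in `GL₂(𝔽_p)`. -/
def diagGL (p : ℕ) : Subgroup (GL (Fin 2) (ZMod p)) where
  carrier := {g | ∃ v : Fin 2 → ZMod p,
    (g : Matrix (Fin 2) (Fin 2) (ZMod p)) = Matrix.diagonal v}
  one_mem' := ⟨1, Matrix.diagonal_one.symm⟩
  mul_mem' := by
    rintro g h ⟨v, hv⟩ ⟨w, hw⟩
    exact ⟨v * w, by rw [Units.val_mul, hv, hw, Matrix.diagonal_mul_diagonal]; rfl⟩
  inv_mem' := by
    rintro g ⟨v, hv⟩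
    exact ⟨Ring.inverse v, by rw [Matrix.coe_units_inv, hv, Matrix.inv_diagonal]⟩

/-- The subgroup of `GL₂(𝔽_p)` consisting of the units of a subalgebra `A` of the
`2×2` matrix ring, i.e. the invertible matrices `g` with both `g` and `g⁻¹` in `A`. -/
def unitsIn (p : ℕ) (A : Subalgebra (ZMod p) (Matrix (Fin 2) (Fin 2) (ZMod p))) :
    Subgroup (GL (Fin 2) (ZMod p)) where
  carrier := {g | ((g : GL (Fin 2) (ZMod p)) : Matrix (Fin 2) (Fin 2) (ZMod p)) ∈ A ∧
    ((g⁻¹ : GL (Fin 2) (ZMod p)) : Matrix (Fin 2) (Fin 2) (ZMod p)) ∈ A}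
  one_mem' := ⟨A.one_mem, by rw [inv_one]; exact A.one_mem⟩
  mul_mem' := fun {g h} hg hh => ⟨by rw [Units.val_mul]; exact A.mul_mem hg.1 hh.1,
    by rw [_root_.mul_inv_rev, Units.val_mul]; exact A.mul_mem hh.2 hg.2⟩
  inv_mem' := fun {g} hg => ⟨hg.2, by rw [inv_inv]; exact hg.1⟩

/-- A split Cartan subgroup of `GL₂(𝔽_p)`: a conjugate of the subgroup of invertible
diagonal matrices. -/
def IsSplitCartan (p : ℕ) (C : Subgroup (GL (Fin 2) (ZMod p))) : Prop :=
  ∃ g : GL (Fin 2) (ZMod p), C = Subgroup.map (MulAut.conj g).toMonoidHom (diagGL p)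

/-- A non-split Cartan subgroup of `GL₂(𝔽_p)`: the group of units of an
`𝔽_p`-subalgebra of the `2×2` matrix ring which is a field with `p²` elements. -/
def IsNonsplitCartan (p : ℕ) (C : Subgroup (GL (Fin 2) (ZMod p))) : Prop :=
  ∃ A : Subalgebra (ZMod p) (Matrix (Fin 2) (Fin 2) (ZMod p)),
    IsField A ∧ Nat.card A = p ^ 2 ∧ C = unitsIn p A

/-- A Cartan subgroup of `GL₂(𝔽_p)` is a split or non-split Cartan subgroup. -/
def IsCartan (p : ℕ) (C : Subgroup (GL (Fin 2) (ZMod p))) : Prop :=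
  IsSplitCartan p C ∨ IsNonsplitCartan p C
open Matrix

/-- The group homomorphism `𝔽_p* → GL₂(𝔽_p)` sending `c` to the scalar matrix `c·I`. -/
def scalarHom (p : ℕ) : (ZMod p)ˣ →* GL (Fin 2) (ZMod p) :=
  Units.map (Matrix.scalar (Fin 2)).toMonoidHom

/-- The subgroup of scalar matrices in `GL₂(𝔽_p)`. -/
def scalarGL (p : ℕ) : Subgroup (GL (Fin 2) (ZMod p)) :=
  (scalarHom p).range

instance scalarGL_normal (p : ℕ) : (scalarGL p).Normal := by
  constructor
  rintro n ⟨u, rfl⟩ g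
  refine ⟨u, ?_⟩
  have hcomm : Commute ((Matrix.scalar (Fin 2)) (u : ZMod p))
      ((g : Matrix (Fin 2) (Fin 2) (ZMod p))) :=
    Matrix.scalar_commute _ (fun r => Commute.all _ r) _
  ext
  simp only [scalarHom, Units.val_mul, Units.coe_map, RingHom.toMonoidHom_eq_coe,
    MonoidHom.coe_coe]
  rw [← hcomm.eq, mul_assoc, ← Units.val_mul, mul_inv_cancel, Units.val_one, mul_one]

/-- `PGL₂(𝔽_p)`: the quotient of `GL₂(𝔽_p)` by its subgroup of scalar matrices. -/
abbrev PGL2 (p : ℕ) : Type := GL (Fin 2) (ZMod p) ⧸ scalarGL p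

/-- The projection `GL₂(𝔽_p) → PGL₂(𝔽_p)`. -/
def projGL (p : ℕ) : GL (Fin 2) (ZMod p) →* PGL2 p :=
  QuotientGroup.mk' (scalarGL p)

/-- `PSL₂(𝔽_p)`: the image of `SL₂(𝔽_p)` in `PGL₂(𝔽_p)`. -/
def PSL2 (p : ℕ) : Subgroup (PGL2 p) :=
  ((projGL p).comp Matrix.SpecialLinearGroup.toGL).range

/-!
Statement 11: let `N ≤ PGL₂(𝔽_p)` be isomorphic to the Klein four-group.
(a) If `N ⊆ PSL₂(𝔽_p)`, every order-2 element of `N` lies in the image of a Cartan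
subgroup whose normalizer's image contains `N`, split if `p ≡ 1 (mod 4)` and
non-split if `p ≡ 3 (mod 4)`.
(b) If `N ⊄ PSL₂(𝔽_p)`, exactly one of the three order-2 elements of `N` lies in
`PSL₂(𝔽_p)`; it lies in the image of a split (resp. non-split) Cartan subgroup and
the other two in images of non-split (resp. split) Cartan subgroups when
`p ≡ 1 (mod 4)` (resp. `p ≡ 3 (mod 4)`).
-/

section Helpers
open Matrix
variable {p : ℕ} [Fact p.Prime]

lemma smul_one_eq_scalar (r : ZMod p) :
    r • (1 : Matrix (Fin 2) (Fin 2) (ZMod p)) = Matrix.scalar (Fin 2) r := by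
  simp [Matrix.smul_eq_diagonal_mul]

lemma scalarHom_val (u : (ZMod p)ˣ) :
    ((scalarHom p u : GL (Fin 2) (ZMod p)) : Matrix (Fin 2) (Fin 2) (ZMod p))
      = (u : ZMod p) • 1 := by
  rw [smul_one_eq_scalar]; rfl

-- Cayley–Hamilton consequence for 2×2 involution-mod-scalars
lemma trace_det_of_sq_scalar {M : Matrix (Fin 2) (Fin 2) (ZMod p)} {c : ZMod p}
    (hM : M * M = c • 1) (hns : ∀ t : ZMod p, M ≠ t • 1) :
    M.trace = 0 ∧ M.det = -c := by
  have ha := congrFun (congrFun hM 0) 0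
  have hb := congrFun (congrFun hM 0) 1
  have hc := congrFun (congrFun hM 1) 0
  have hd := congrFun (congrFun hM 1) 1
  simp [Matrix.mul_apply, Fin.sum_univ_two, Matrix.one_apply, Matrix.smul_apply] at ha hb hc hd
  by_cases ht : M 0 0 + M 1 1 = 0
  · constructor
    · simp [Matrix.trace_fin_two, ht]
    · have : M 1 1 = -(M 0 0) := by linear_combination ht
      rw [Matrix.det_fin_two]
      have : M 0 0 * M 1 1 - M 0 1 * M 1 0 = -(M 0 0 * M 0 0 + M 0 1 * M 1 0) := by
        rw [this]; ring
      rw [this, ha]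
  · exfalso
    have hb0 : M 0 1 = 0 := by
      rcases mul_eq_zero.mp (show M 0 1 * (M 0 0 + M 1 1) = 0 by linear_combination hb) with h | h
      · exact h
      · exact absurd h ht
    have hc0 : M 1 0 = 0 := by
      rcases mul_eq_zero.mp (show M 1 0 * (M 0 0 + M 1 1) = 0 by linear_combination hc) with h | h
      · exact h
      · exact absurd h ht
    have hsq : M 0 0 * M 0 0 = M 1 1 * M 1 1 := by
      rw [hb0] at ha; rw [hc0] at hd; simp at ha hd; rw [ha, hd]
    have : (M 0 0 - M 1 1) * (M 0 0 + M 1 1) = 0 := by ring_nf; linear_combination hsq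
    rcases mul_eq_zero.mp this with h | h
    · have had : M 0 0 = M 1 1 := by linear_combination h
      apply hns (M 0 0)
      ext i j
      fin_cases i <;> fin_cases j <;>
        simp [Matrix.smul_apply, Matrix.one_apply, hb0, hc0, had.symm]
    · exact ht h

end Helpers
section Core
open Matrix
variable {p : ℕ} [Fact p.Prime]

/-- The subalgebra spanned by `1` and a matrix `M` with `M² = c•1`. -/
def spanAlg (p : ℕ) [Fact p.Prime] (M : Matrix (Fin 2) (Fin 2) (ZMod p)) (c : ZMod p)
    (hM : M * M = c • 1) : Subalgebra (ZMod p) (Matrix (Fin 2) (Fin 2) (ZMod p)) where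
  carrier := {m | ∃ a b : ZMod p, m = a • 1 + b • M}
  add_mem' := by
    rintro x y ⟨a, b, rfl⟩ ⟨a', b', rfl⟩
    exact ⟨a + a', b + b', by module⟩
  mul_mem' := by
    rintro x y ⟨a, b, rfl⟩ ⟨a', b', rfl⟩
    refine ⟨a * a' + b * b' * c, a * b' + b * a', ?_⟩
    have : (a • 1 + b • M) * (a' • 1 + b' • M)
        = (a * a') • 1 + (a * b' + b * a') • M + (b * b') • (M * M) := by
      simp only [mul_add, add_mul, smul_mul_assoc, mul_smul_comm, one_mul, mul_one]
      module
    rw [this, hM]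
    module
  algebraMap_mem' := fun r => ⟨r, 0, by simp [Algebra.algebraMap_eq_smul_one]⟩

variable {M : Matrix (Fin 2) (Fin 2) (ZMod p)} {c : ZMod p} {hM : M * M = c • 1}

lemma indep (hns : ∀ t : ZMod p, M ≠ t • 1) {a b : ZMod p}
    (h : a • 1 + b • M = 0) : a = 0 ∧ b = 0 := by
  by_cases hb : b = 0
  · subst hb
    simp at h
    exact ⟨h, rfl⟩
  · exfalso
    apply hns (-(b⁻¹ * a))
    have : M = (-(b⁻¹ * a)) • 1 := by
      have hM' : b • M = -(a • 1) := by linear_combination (norm := module) h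
      calc M = b⁻¹ • (b • M) := by rw [smul_smul, inv_mul_cancel₀ hb, one_smul]
        _ = (-(b⁻¹ * a)) • 1 := by rw [hM']; module
    exact this

/-- representation coefficients are unique -/
lemma indep' (hns : ∀ t : ZMod p, M ≠ t • 1) {a b a' b' : ZMod p}
    (h : a • 1 + b • M = a' • 1 + b' • M) : a = a' ∧ b = b' := by
  have := indep (M := M) hns (a := a - a') (b := b - b')
    (by linear_combination (norm := module) h)
  constructor <;> [linear_combination this.1; linear_combination this.2]

lemma mul_conj_formula (hM : M * M = c • 1) (a b : ZMod p) :
    (a • 1 + b • M) * (a • 1 - b • M) = (a * a - b * b * c) • (1 : Matrix (Fin 2) (Fin 2) (ZMod p)) := by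
  have : (a • 1 + b • M) * (a • 1 - b • M)
      = (a * a) • 1 - (b * b) • (M * M) := by
    simp only [mul_sub, add_mul, smul_mul_assoc, mul_smul_comm, one_mul, mul_one]
    module
  rw [this, hM]
  module

lemma norm_ne_zero (hM : M * M = c • 1) (hns : ∀ t : ZMod p, M ≠ t • 1)
    {u : GL (Fin 2) (ZMod p)} {a b : ZMod p}
    (hu : (u : Matrix (Fin 2) (Fin 2) (ZMod p)) = a • 1 + b • M) :
    a * a - b * b * c ≠ 0 := by
  intro hn
  have h0 : (u : Matrix (Fin 2) (Fin 2) (ZMod p)) * (a • 1 - b • M) = 0 := by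
    rw [hu, mul_conj_formula hM, hn, zero_smul]
  have h1 : a • (1 : Matrix (Fin 2) (Fin 2) (ZMod p)) - b • M = 0 := by
    calc a • (1 : Matrix (Fin 2) (Fin 2) (ZMod p)) - b • M
        = (↑u⁻¹ * ↑u) * (a • 1 - b • M) := by
          rw [← Units.val_mul, inv_mul_cancel, Units.val_one, one_mul]
      _ = ↑u⁻¹ * ((u : Matrix (Fin 2) (Fin 2) (ZMod p)) * (a • 1 - b • M)) := by rw [mul_assoc]
      _ = 0 := by rw [h0, mul_zero]
  have := indep (M := M) hns (a := a) (b := -b) (by linear_combination (norm := module) h1)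
  have hu0 : (u : Matrix (Fin 2) (Fin 2) (ZMod p)) = 0 := by
    rw [hu, this.1]
    have hb : b = 0 := by linear_combination -this.2
    rw [hb]; module
  have : (1 : Matrix (Fin 2) (Fin 2) (ZMod p)) = 0 := by
    calc (1 : Matrix (Fin 2) (Fin 2) (ZMod p)) = ↑u⁻¹ * ↑u := by
          rw [← Units.val_mul, inv_mul_cancel, Units.val_one]
      _ = 0 := by rw [hu0, mul_zero]
  exact one_ne_zero this

lemma inv_val_eq (hM : M * M = c • 1) (hns : ∀ t : ZMod p, M ≠ t • 1)
    {u : GL (Fin 2) (ZMod p)} {a b : ZMod p}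
    (hu : (u : Matrix (Fin 2) (Fin 2) (ZMod p)) = a • 1 + b • M) :
    ((u⁻¹ : GL (Fin 2) (ZMod p)) : Matrix (Fin 2) (Fin 2) (ZMod p))
      = ((a * a - b * b * c)⁻¹ * a) • 1 + (-((a * a - b * b * c)⁻¹ * b)) • M := by
  have hn := norm_ne_zero hM hns hu
  apply Units.inv_eq_of_mul_eq_one_right
  rw [hu]
  have : (a • (1 : Matrix (Fin 2) (Fin 2) (ZMod p)) + b • M) *
      (((a * a - b * b * c)⁻¹ * a) • 1 + (-((a * a - b * b * c)⁻¹ * b)) • M)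
      = (a * a - b * b * c)⁻¹ • ((a • 1 + b • M) * (a • 1 - b • M)) := by
    simp only [mul_add, add_mul, mul_sub, smul_mul_assoc, mul_smul_comm, one_mul, mul_one]
    module
  rw [this, mul_conj_formula hM, smul_smul, inv_mul_cancel₀ hn, one_smul]

lemma mem_unitsIn_iff (hM : M * M = c • 1) (hns : ∀ t : ZMod p, M ≠ t • 1)
    (u : GL (Fin 2) (ZMod p)) :
    u ∈ unitsIn p (spanAlg p M c hM) ↔
      ∃ a b : ZMod p, (u : Matrix (Fin 2) (Fin 2) (ZMod p)) = a • 1 + b • M := by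
  constructor
  · exact fun h => h.1
  · rintro ⟨a, b, hu⟩
    refine ⟨⟨a, b, hu⟩, ?_⟩
    exact ⟨_, _, inv_val_eq hM hns hu⟩

lemma span_mul (hM : M * M = c • 1) (a b a' b' : ZMod p) :
    (a • 1 + b • M) * (a' • 1 + b' • M)
      = (a * a' + b * b' * c) • (1 : Matrix (Fin 2) (Fin 2) (ZMod p)) + (a * b' + b * a') • M := by
  have : (a • 1 + b • M) * (a' • 1 + b' • M)
      = (a * a') • 1 + (a * b' + b * a') • M + (b * b') • (M * M) := by
    simp only [mul_add, add_mul, smul_mul_assoc, mul_smul_comm, one_mul, mul_one]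
    module
  rw [this, hM]
  module

lemma nonsquare_norm_ne_zero (hsq : ¬ IsSquare c) {a b : ZMod p}
    (hab : ¬ (a = 0 ∧ b = 0)) : a * a - b * b * c ≠ 0 := by
  intro hn
  by_cases hb : b = 0
  · subst hb
    simp at hn
    exact hab ⟨hn, rfl⟩
  · exact hsq ⟨a * b⁻¹, by
      have : c = (a * b⁻¹) * (a * b⁻¹) := by field_simp; linear_combination -hn
      exact this⟩

lemma spanAlg_isField (hM : M * M = c • 1)
    (hsq : ¬ IsSquare c) : IsField (spanAlg p M c hM) := by
  constructor
  · exact ⟨0, 1, by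
      intro h
      have := congrArg Subtype.val h
      simp at this⟩
  · rintro ⟨x, a, b, rfl⟩ ⟨y, a', b', rfl⟩
    apply Subtype.ext
    push_cast
    rw [span_mul hM, span_mul hM]
    ring_nf
  · rintro ⟨x, a, b, rfl⟩ hx0
    have hab : ¬ (a = 0 ∧ b = 0) := by
      rintro ⟨rfl, rfl⟩
      apply hx0
      apply Subtype.ext
      simp
    have hn := nonsquare_norm_ne_zero hsq hab
    set n := a * a - b * b * c with hn_def
    refine ⟨⟨(n⁻¹ * a) • 1 + (-(n⁻¹ * b)) • M, _, _, rfl⟩, ?_⟩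
    apply Subtype.ext
    push_cast
    rw [span_mul hM]
    have h1 : a * (n⁻¹ * a) + b * (-(n⁻¹ * b)) * c = 1 := by
      field_simp
      ring
    have h2 : a * (-(n⁻¹ * b)) + b * (n⁻¹ * a) = 0 := by ring
    rw [h1, h2]
    simp

lemma spanAlg_card (hM : M * M = c • 1) (hns : ∀ t : ZMod p, M ≠ t • 1) :
    Nat.card (spanAlg p M c hM) = p ^ 2 := by
  have e : (ZMod p × ZMod p) ≃ (spanAlg p M c hM) := by
    refine Equiv.ofBijective (fun ab => ⟨ab.1 • 1 + ab.2 • M, ab.1, ab.2, rfl⟩) ⟨?_, ?_⟩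
    · rintro ⟨a, b⟩ ⟨a', b'⟩ h
      have := indep' (M := M) hns (congrArg Subtype.val h)
      simp only [Prod.mk.injEq]
      exact ⟨this.1, this.2⟩
    · rintro ⟨x, a, b, rfl⟩
      exact ⟨(a, b), rfl⟩
  rw [← Nat.card_congr e, Nat.card_prod, Nat.card_zmod, sq]

lemma spanAlg_split (hM : M * M = c • 1) (hns : ∀ t : ZMod p, M ≠ t • 1)
    (h2 : (2 : ZMod p) ≠ 0) (hc0 : c ≠ 0) (hsq : IsSquare c) :
    IsSplitCartan p (unitsIn p (spanAlg p M c hM)) := by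
  obtain ⟨d, hd⟩ := hsq
  have hd0 : d ≠ 0 := by rintro rfl; exact hc0 (by rw [hd, mul_zero])
  -- nonzero entries of M ± d•1
  have hplus : M + d • 1 ≠ 0 := by
    intro h
    exact hns (-d) (by linear_combination (norm := module) h)
  have hminus : M - d • 1 ≠ 0 := by
    intro h
    exact hns d (by linear_combination (norm := module) h)
  obtain ⟨i₀, j₀, hij₀⟩ : ∃ i j, (M + d • 1) i j ≠ 0 := by
    by_contra h; push_neg at h; exact hplus (by ext i j; exact h i j)
  obtain ⟨i₁, j₁, hij₁⟩ : ∃ i j, (M - d • 1) i j ≠ 0 := by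
    by_contra h; push_neg at h; exact hminus (by ext i j; exact h i j)
  set v : Fin 2 → ZMod p := (M + d • 1).mulVec (Pi.single j₀ 1) with hv_def
  set w : Fin 2 → ZMod p := (M - d • 1).mulVec (Pi.single j₁ 1) with hw_def
  have hvi : v i₀ ≠ 0 := by
    rw [hv_def, Matrix.mulVec_single]
    simpa using hij₀
  have hwi : w i₁ ≠ 0 := by
    rw [hw_def, Matrix.mulVec_single]
    simpa using hij₁
  have hMplus : M * (M + d • 1) = d • (M + d • 1) := by
    rw [mul_add, hM, mul_smul_comm, mul_one, hd]
    module
  have hMminus : M * (M - d • 1) = (-d) • (M - d • 1) := by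
    rw [mul_sub, hM, mul_smul_comm, mul_one, hd]
    module
  have hv : M.mulVec v = d • v := by
    rw [hv_def, Matrix.mulVec_mulVec, hMplus, Matrix.smul_mulVec]
  have hw : M.mulVec w = (-d) • w := by
    rw [hw_def, Matrix.mulVec_mulVec, hMminus, Matrix.smul_mulVec]
  have hv' : ∀ i, M i 0 * v 0 + M i 1 * v 1 = d * v i := fun i => by
    simpa [Matrix.mulVec, dotProduct, Fin.sum_univ_two] using congrFun hv i
  have hw' : ∀ i, M i 0 * w 0 + M i 1 * w 1 = -d * w i := fun i => by
    have := congrFun hw i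
    simpa [Matrix.mulVec, dotProduct, Fin.sum_univ_two] using this
  set P : Matrix (Fin 2) (Fin 2) (ZMod p) :=
    Matrix.of (fun i k => if k = 0 then v i else w i) with hP_def
  set D : Matrix (Fin 2) (Fin 2) (ZMod p) := Matrix.diagonal ![d, -d] with hD_def
  have hP00 : ∀ i, P i 0 = v i := fun i => rfl
  have hP01 : ∀ i, P i 1 = w i := fun i => rfl
  have key : M * P = P * D := by
    ext i k
    fin_cases k
    · simp [Matrix.mul_apply, Fin.sum_univ_two, hP_def, hD_def, Matrix.diagonal]
      linear_combination hv' i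
    · simp [Matrix.mul_apply, Fin.sum_univ_two, hP_def, hD_def, Matrix.diagonal]
      linear_combination hw' i
  have hdetP : P.det ≠ 0 := by
    intro h
    obtain ⟨z, hz0, hz⟩ := (Matrix.exists_mulVec_eq_zero_iff).mpr h
    have hz' : ∀ i, v i * z 0 + w i * z 1 = 0 := fun i => by
      have := congrFun hz i
      simpa [Matrix.mulVec, dotProduct, Fin.sum_univ_two, hP_def] using this
    by_cases hz1 : z 1 = 0
    · have hz00 : z 0 ≠ 0 := by
        intro hz00
        apply hz0
        ext i
        fin_cases i
        · exact hz00
        · exact hz1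
      have := hz' i₀
      rw [hz1, mul_zero, add_zero] at this
      rcases mul_eq_zero.mp this with h' | h'
      · exact hvi h'
      · exact hz00 h'
    · set t : ZMod p := -(z 0) * (z 1)⁻¹ with ht_def
      have hwt : ∀ i, w i = t * v i := fun i => by
        have := hz' i
        rw [ht_def]
        linear_combination (z 1)⁻¹ * this - w i * (mul_inv_cancel₀ hz1)
      exfalso
      have h1 : M i₁ 0 * w 0 + M i₁ 1 * w 1 = t * (d * v i₁) := by
        rw [hwt 0, hwt 1]
        calc M i₁ 0 * (t * v 0) + M i₁ 1 * (t * v 1)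
            = t * (M i₁ 0 * v 0 + M i₁ 1 * v 1) := by ring
          _ = t * (d * v i₁) := by rw [hv' i₁]
      have hh2 := hw' i₁
      rw [h1] at hh2
      have h3 : (2 : ZMod p) * d * w i₁ = 0 := by
        rw [hwt i₁] at hh2 ⊢
        linear_combination hh2
      rcases mul_eq_zero.mp h3 with h' | h'
      · rcases mul_eq_zero.mp h' with h'' | h''
        · exact h2 h''
        · exact hd0 h''
      · exact hwi h'
  have hPu : IsUnit P := (Matrix.isUnit_iff_isUnit_det P).mpr (Ne.isUnit hdetP)
  have hDu : IsUnit D := by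
    apply (Matrix.isUnit_iff_isUnit_det D).mpr
    apply Ne.isUnit
    rw [hD_def, Matrix.det_diagonal]
    simp [Fin.prod_univ_two]
    intro h'
    exact hd0 h'
  set Pu : GL (Fin 2) (ZMod p) := hPu.unit with hPu_def
  set Du : GL (Fin 2) (ZMod p) := hDu.unit with hDu_def
  have hPuv : (Pu : Matrix (Fin 2) (Fin 2) (ZMod p)) = P := hPu.unit_spec
  have hDuv : (Du : Matrix (Fin 2) (Fin 2) (ZMod p)) = D := hDu.unit_spec
  set Q : Matrix (Fin 2) (Fin 2) (ZMod p) := ((Pu⁻¹ : GL (Fin 2) (ZMod p)) : Matrix (Fin 2) (Fin 2) (ZMod p)) with hQ_def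
  have hQP : Q * P = 1 := by
    rw [hQ_def, ← hPuv, ← Units.val_mul, inv_mul_cancel, Units.val_one]
  have hPQ : P * Q = 1 := by
    rw [hQ_def, ← hPuv, ← Units.val_mul, mul_inv_cancel, Units.val_one]
  have hPD : ∀ a b : ZMod p, (a • 1 + b • M) * P = P * (a • (1 : Matrix (Fin 2) (Fin 2) (ZMod p)) + b • D) := by
    intro a b
    rw [add_mul, mul_add, smul_mul_assoc, smul_mul_assoc, mul_smul_comm, mul_smul_comm,
      one_mul, mul_one, key]
  refine ⟨Pu, ?_⟩
  apply Subgroup.ext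
  intro u
  constructor
  · rintro ⟨⟨a, b, hu⟩, -⟩
    refine ⟨Pu⁻¹ * u * Pu, ?_, ?_⟩
    · refine ⟨![a + b * d, a + b * (-d)], ?_⟩
      have hzval : ((Pu⁻¹ * u * Pu : GL (Fin 2) (ZMod p)) : Matrix (Fin 2) (Fin 2) (ZMod p))
          = a • 1 + b • D := by
        calc ((Pu⁻¹ * u * Pu : GL (Fin 2) (ZMod p)) : Matrix (Fin 2) (Fin 2) (ZMod p))
            = Q * ((a • 1 + b • M) * P) := by
              rw [Units.val_mul, Units.val_mul, hu, hPuv, hQ_def, mul_assoc]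
          _ = Q * (P * (a • 1 + b • D)) := by rw [hPD]
          _ = (Q * P) * (a • 1 + b • D) := by rw [mul_assoc]
          _ = a • 1 + b • D := by rw [hQP, one_mul]
      rw [hzval]
      ext i k
      fin_cases i <;> fin_cases k <;>
        simp [hD_def, Matrix.diagonal, Matrix.one_apply] <;> ring
    · show Pu * (Pu⁻¹ * u * Pu) * Pu⁻¹ = u
      group
  · rintro ⟨z, ⟨vv, hzv⟩, rfl⟩
    show Pu * z * Pu⁻¹ ∈ unitsIn p (spanAlg p M c hM)
    set a : ZMod p := (vv 0 + vv 1) / 2 with ha_def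
    set b : ZMod p := (vv 0 - vv 1) / (2 * d) with hb_def
    have hdiag : Matrix.diagonal vv = a • (1 : Matrix (Fin 2) (Fin 2) (ZMod p)) + b • D := by
      ext i k
      fin_cases i <;> fin_cases k <;>
        simp [hD_def, Matrix.diagonal, Matrix.one_apply, ha_def, hb_def] <;>
        field_simp <;> ring
    rw [mem_unitsIn_iff hM hns]
    refine ⟨a, b, ?_⟩
    calc ((Pu * z * Pu⁻¹ : GL (Fin 2) (ZMod p)) : Matrix (Fin 2) (Fin 2) (ZMod p))
        = P * (a • 1 + b • D) * Q := by
          rw [Units.val_mul, Units.val_mul, hzv, hdiag, hPuv, hQ_def]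
      _ = ((a • 1 + b • M) * P) * Q := by rw [hPD]
      _ = (a • 1 + b • M) * (P * Q) := by rw [mul_assoc]
      _ = a • 1 + b • M := by rw [hPQ, mul_one]
section Helpers2
open Matrix
variable {p : ℕ} [Fact p.Prime]

lemma scalarHom_central (u : (ZMod p)ˣ) (g : GL (Fin 2) (ZMod p)) :
    scalarHom p u * g = g * scalarHom p u := by
  apply Units.ext
  rw [Units.val_mul, Units.val_mul]
  exact (Matrix.scalar_commute (u : ZMod p) (fun r => Commute.all _ r)
    (g : Matrix (Fin 2) (Fin 2) (ZMod p))).eq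

lemma scalarHom_inj {u w : (ZMod p)ˣ} (h : scalarHom p u = scalarHom p w) : u = w := by
  apply Units.ext
  have := congrArg (fun g : GL (Fin 2) (ZMod p) => (g : Matrix (Fin 2) (Fin 2) (ZMod p)) 0 0) h
  simpa [scalarHom, Matrix.scalar_apply, Matrix.diagonal] using this

lemma ker_projGL : (projGL p).ker = scalarGL p := QuotientGroup.ker_mk' _

lemma projGL_eq_iff {g h : GL (Fin 2) (ZMod p)} :
    projGL p g = projGL p h ↔ ∃ u : (ZMod p)ˣ, g * scalarHom p u = h := by
  rw [projGL, QuotientGroup.mk'_eq_mk']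
  constructor
  · rintro ⟨z, ⟨u, rfl⟩, h⟩
    exact ⟨u, h⟩
  · rintro ⟨u, h⟩
    exact ⟨scalarHom p u, ⟨u, rfl⟩, h⟩

lemma zmod_two_ne_zero (hp : Odd p) : (2 : ZMod p) ≠ 0 := by
  have hp2 : p ≠ 2 := by rintro rfl; simp [Nat.odd_iff] at hp
  intro h
  have : ((2 : ℕ) : ZMod p) = 0 := by exact_mod_cast h
  rw [ZMod.natCast_eq_zero_iff] at this
  exact hp2 ((Nat.prime_dvd_prime_iff_eq (Fact.out) Nat.prime_two).mp this)
lemma det_scalarHom (u : (ZMod p)ˣ) :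
    ((scalarHom p u : GL (Fin 2) (ZMod p)) : Matrix (Fin 2) (Fin 2) (ZMod p)).det
      = (u : ZMod p) * (u : ZMod p) := by
  rw [scalarHom_val, Matrix.det_smul, Matrix.det_one]
  simp [sq]

lemma mem_PSL2_iff {g : GL (Fin 2) (ZMod p)} :
    projGL p g ∈ PSL2 p ↔ IsSquare ((g : Matrix (Fin 2) (Fin 2) (ZMod p)).det) := by
  constructor
  · rintro ⟨S, hS⟩
    simp only [MonoidHom.comp_apply] at hS
    obtain ⟨u, hu⟩ := projGL_eq_iff.mp hS
    refine ⟨(u : ZMod p), ?_⟩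
    have := congrArg (fun g : GL (Fin 2) (ZMod p) => (g : Matrix (Fin 2) (Fin 2) (ZMod p)).det) hu
    simp only [Units.val_mul, Matrix.det_mul] at this
    rw [← this, det_scalarHom]
    have hdetS : ((Matrix.SpecialLinearGroup.toGL S : GL (Fin 2) (ZMod p)) :
        Matrix (Fin 2) (Fin 2) (ZMod p)).det = 1 := S.2
    rw [hdetS, one_mul]
  · rintro ⟨r, hr⟩
    have hdet : ((g : Matrix (Fin 2) (Fin 2) (ZMod p))).det ≠ 0 := by
      have : IsUnit ((g : Matrix (Fin 2) (Fin 2) (ZMod p))).det :=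
        (Matrix.isUnit_iff_isUnit_det _).mp g.isUnit
      exact this.ne_zero
    have hr0 : r ≠ 0 := by rintro rfl; rw [mul_zero] at hr; exact hdet hr
    have hru : IsUnit r := Ne.isUnit hr0
    set S : Matrix.SpecialLinearGroup (Fin 2) (ZMod p) :=
      ⟨r⁻¹ • (g : Matrix (Fin 2) (Fin 2) (ZMod p)), by
        rw [Matrix.det_smul]
        simp only [Fintype.card_fin]
        rw [hr]
        field_simp⟩ with hS_def
    refine ⟨S, ?_⟩
    simp only [MonoidHom.comp_apply]
    apply projGL_eq_iff.mpr
    refine ⟨hru.unit, ?_⟩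
    apply Units.ext
    rw [Units.val_mul, scalarHom_val]
    show (r⁻¹ • (g : Matrix (Fin 2) (Fin 2) (ZMod p))) * ((hru.unit : ZMod p) • 1) = _
    rw [IsUnit.unit_spec]
    rw [mul_smul_comm, mul_one, smul_smul, mul_inv_cancel₀ hr0, one_smul]

lemma mod4_cases (hp : Odd p) : p % 4 = 1 ∨ p % 4 = 3 := by
  have h1 : p % 2 = 1 := Nat.odd_iff.mp hp
  omega

lemma isSquare_neg_one_iff (hp : Odd p) : IsSquare (-1 : ZMod p) ↔ p % 4 = 1 := by
  rw [ZMod.exists_sq_eq_neg_one_iff]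
  rcases mod4_cases (p := p) hp with h | h <;> omega

lemma isSquare_of_iff_one (hp : Odd p) {c : ZMod p} (hc0 : c ≠ 0)
    (h : IsSquare (-c) ↔ p % 4 = 1) : IsSquare c := by
  rcases mod4_cases (p := p) hp with h4 | h4
  · have h1 : IsSquare (-c) := h.mpr h4
    have h2 : IsSquare (-1 : ZMod p) := (isSquare_neg_one_iff hp).mpr h4
    have : c = (-1) * (-c) := by ring
    rw [this]
    exact h2.mul h1
  · have h1 : ¬ IsSquare (-c) := fun hs => by rw [h] at hs; omega
    have h2 : ¬ IsSquare (-1 : ZMod p) := fun hs' => by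
      rw [isSquare_neg_one_iff hp] at hs'; omega
    have hq1 : quadraticChar (ZMod p) (-1) = -1 :=
      quadraticChar_neg_one_iff_not_isSquare.mpr h2
    have hq2 : quadraticChar (ZMod p) (-c) = -1 :=
      quadraticChar_neg_one_iff_not_isSquare.mpr h1
    have : quadraticChar (ZMod p) c = 1 := by
      have : c = (-1) * (-c) := by ring
      rw [this, _root_.map_mul, hq1, hq2]
      ring
    exact (quadraticChar_one_iff_isSquare hc0).mp this

lemma not_isSquare_of_iff_three (hp : Odd p) {c : ZMod p} (hc0 : c ≠ 0)
    (h : IsSquare (-c) ↔ p % 4 = 3) : ¬ IsSquare c := by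
  rcases mod4_cases (p := p) hp with h4 | h4
  · intro hs
    have h1 : ¬ IsSquare (-c) := fun hs' => by rw [h] at hs'; omega
    have h2 : IsSquare (-1 : ZMod p) := (isSquare_neg_one_iff hp).mpr h4
    apply h1
    have : -c = (-1) * c := by ring
    rw [this]
    exact h2.mul hs
  · intro hs
    have h1 : IsSquare (-c) := h.mpr h4
    have h2 : ¬ IsSquare (-1 : ZMod p) := fun hs' => by
      rw [isSquare_neg_one_iff hp] at hs'; omega
    apply h2
    obtain ⟨r, hr⟩ := h1
    obtain ⟨t, ht⟩ := hs
    have ht0 : t ≠ 0 := by rintro rfl; rw [mul_zero] at ht; exact hc0 ht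
    refine ⟨r * t⁻¹, ?_⟩
    field_simp
    linear_combination hr + ht

end Helpers2
section Main
open Matrix

lemma cartan_main (p : ℕ) [Fact p.Prime] (hp : Odd p) (x : PGL2 p) (hx : orderOf x = 2) :
    ∃ C : Subgroup (GL (Fin 2) (ZMod p)),
      x ∈ Subgroup.map (projGL p) C ∧
      (∀ y : PGL2 p, x * y = y * x → y ∈ Subgroup.map (projGL p) (Subgroup.normalizer (C : Set (GL (Fin 2) (ZMod p))))) ∧
      ((x ∈ PSL2 p ↔ p % 4 = 1) → IsSplitCartan p C) ∧
      ((x ∈ PSL2 p ↔ p % 4 = 3) → IsNonsplitCartan p C) := by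
  obtain ⟨g, hg0⟩ := QuotientGroup.mk'_surjective (scalarGL p) x
  have hg : projGL p g = x := hg0
  have hx2 : x ^ 2 = 1 := by
    have := pow_orderOf_eq_one x
    rwa [hx] at this
  have hg2 : g ^ 2 ∈ scalarGL p := by
    have : projGL p (g ^ 2) = 1 := by rw [_root_.map_pow, hg, hx2]
    rwa [← MonoidHom.mem_ker, ker_projGL] at this
  obtain ⟨u, hu⟩ := hg2
  set M : Matrix (Fin 2) (Fin 2) (ZMod p) := (g : Matrix (Fin 2) (Fin 2) (ZMod p)) with hM_def
  set c : ZMod p := (u : ZMod p) with hc_def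
  have hM : M * M = c • 1 := by
    have h1 := congrArg (fun k : GL (Fin 2) (ZMod p) => (k : Matrix (Fin 2) (Fin 2) (ZMod p))) hu
    simp only [scalarHom_val] at h1
    have h2 : ((g ^ 2 : GL (Fin 2) (ZMod p)) : Matrix (Fin 2) (Fin 2) (ZMod p)) = M * M := by
      rw [sq, Units.val_mul]
    rw [h2] at h1
    exact h1.symm
  have hc0 : c ≠ 0 := u.ne_zero
  have hx1 : x ≠ 1 := by intro h; rw [h, orderOf_one] at hx; omega
  have hns : ∀ t : ZMod p, M ≠ t • 1 := by
    intro t ht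
    have ht0 : t ≠ 0 := by
      rintro rfl
      rw [zero_smul] at ht
      have h1 : M * ((g⁻¹ : GL (Fin 2) (ZMod p)) : Matrix (Fin 2) (Fin 2) (ZMod p)) = 1 := by
        rw [hM_def, ← Units.val_mul, mul_inv_cancel, Units.val_one]
      rw [ht, zero_mul] at h1
      exact one_ne_zero h1.symm
    have htu : IsUnit t := Ne.isUnit ht0
    apply hx1
    rw [← hg]
    have hgs : g = scalarHom p htu.unit := by
      apply Units.ext
      rw [scalarHom_val, IsUnit.unit_spec]
      exact ht
    rw [hgs, ← MonoidHom.mem_ker, ker_projGL]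
    exact ⟨htu.unit, rfl⟩
  obtain ⟨htr, hdet⟩ := trace_det_of_sq_scalar hM hns
  set A := spanAlg p M c hM with hA_def
  set C := unitsIn p A with hC_def
  have hgC : g ∈ C := by
    rw [hC_def, hA_def, mem_unitsIn_iff hM hns]
    exact ⟨0, 1, by module⟩
  have hPSL : x ∈ PSL2 p ↔ IsSquare (-c) := by
    rw [← hg]
    have h1 := mem_PSL2_iff (p := p) (g := g)
    rw [← hM_def, hdet] at h1
    exact h1
  refine ⟨C, ⟨g, hgC, hg⟩, ?_, ?_, ?_⟩
  · -- normalizer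
    intro y hxy
    obtain ⟨h, hh0⟩ := QuotientGroup.mk'_surjective (scalarGL p) y
    have hh : projGL p h = y := hh0
    have hcomm : projGL p (g * h) = projGL p (h * g) := by
      rw [_root_.map_mul, _root_.map_mul, hg, hh, hxy]
    obtain ⟨lu, hlu⟩ := projGL_eq_iff.mp hcomm
    have hs : ∀ k : GL (Fin 2) (ZMod p), scalarHom p lu * k = k * scalarHom p lu :=
      scalarHom_central lu
    have hcj1 : h * g * h⁻¹ = g * scalarHom p lu := by
      calc h * g * h⁻¹ = (g * h * scalarHom p lu) * h⁻¹ := by rw [hlu]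
        _ = g * h * (scalarHom p lu * h⁻¹) := by group
        _ = g * h * (h⁻¹ * scalarHom p lu) := by rw [hs h⁻¹]
        _ = g * scalarHom p lu := by group
    have hcj2 : h⁻¹ * g * h = g * (scalarHom p lu)⁻¹ := by
      apply eq_mul_inv_iff_mul_eq.mpr
      have e1 : h⁻¹ * (h * g * h⁻¹) * h = g := by group
      rw [hcj1] at e1
      calc h⁻¹ * g * h * scalarHom p lu = h⁻¹ * g * (h * scalarHom p lu) := by group
        _ = h⁻¹ * g * (scalarHom p lu * h) := by rw [hs h]
        _ = h⁻¹ * (g * scalarHom p lu) * h := by group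
        _ = g := e1
    have hmat1 : (h : Matrix (Fin 2) (Fin 2) (ZMod p)) * M *
        ((h⁻¹ : GL (Fin 2) (ZMod p)) : Matrix (Fin 2) (Fin 2) (ZMod p)) = (lu : ZMod p) • M := by
      have := congrArg (fun k : GL (Fin 2) (ZMod p) => (k : Matrix (Fin 2) (Fin 2) (ZMod p))) hcj1
      simp only [Units.val_mul] at this
      rw [this, scalarHom_val, mul_smul_comm, mul_one]
    have hmat2 : ((h⁻¹ : GL (Fin 2) (ZMod p)) : Matrix (Fin 2) (Fin 2) (ZMod p)) * M *
        (h : Matrix (Fin 2) (Fin 2) (ZMod p)) = ((lu⁻¹ : (ZMod p)ˣ) : ZMod p) • M := by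
      have := congrArg (fun k : GL (Fin 2) (ZMod p) => (k : Matrix (Fin 2) (Fin 2) (ZMod p))) hcj2
      simp only [Units.val_mul] at this
      rw [this]
      have : ((scalarHom p lu)⁻¹ : GL (Fin 2) (ZMod p)) = scalarHom p lu⁻¹ := by
        rw [← _root_.map_inv]
      rw [this, scalarHom_val, mul_smul_comm, mul_one]
    have conj_mem : ∀ (k : GL (Fin 2) (ZMod p)) (ε : ZMod p),
        ((k : Matrix (Fin 2) (Fin 2) (ZMod p)) * M *
          ((k⁻¹ : GL (Fin 2) (ZMod p)) : Matrix (Fin 2) (Fin 2) (ZMod p)) = ε • M) →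
        ∀ u' : GL (Fin 2) (ZMod p), u' ∈ C → k * u' * k⁻¹ ∈ C := by
      intro k ε hk u' hu'
      rw [hC_def, hA_def, mem_unitsIn_iff hM hns] at hu' ⊢
      obtain ⟨a, b, hval⟩ := hu'
      refine ⟨a, b * ε, ?_⟩
      have hkk : (k : Matrix (Fin 2) (Fin 2) (ZMod p)) *
          ((k⁻¹ : GL (Fin 2) (ZMod p)) : Matrix (Fin 2) (Fin 2) (ZMod p)) = 1 := by
        rw [← Units.val_mul, mul_inv_cancel, Units.val_one]
      calc ((k * u' * k⁻¹ : GL (Fin 2) (ZMod p)) : Matrix (Fin 2) (Fin 2) (ZMod p))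
          = (k : Matrix (Fin 2) (Fin 2) (ZMod p)) * (a • 1 + b • M) *
            ((k⁻¹ : GL (Fin 2) (ZMod p)) : Matrix (Fin 2) (Fin 2) (ZMod p)) := by
            rw [Units.val_mul, Units.val_mul, hval]
        _ = a • ((k : Matrix (Fin 2) (Fin 2) (ZMod p)) *
              ((k⁻¹ : GL (Fin 2) (ZMod p)) : Matrix (Fin 2) (Fin 2) (ZMod p)))
            + b • ((k : Matrix (Fin 2) (Fin 2) (ZMod p)) * M *
              ((k⁻¹ : GL (Fin 2) (ZMod p)) : Matrix (Fin 2) (Fin 2) (ZMod p))) := by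
            simp only [mul_add, add_mul, mul_smul_comm, smul_mul_assoc, mul_one]
        _ = a • (1 : Matrix (Fin 2) (Fin 2) (ZMod p)) + (b * ε) • M := by
            rw [hkk, hk, smul_smul]
    refine ⟨h, ?_, hh⟩
    show h ∈ Subgroup.normalizer (C : Set (GL (Fin 2) (ZMod p)))
    rw [Subgroup.mem_normalizer_iff]
    intro u'
    constructor
    · exact fun hu' => conj_mem h (lu : ZMod p) hmat1 u' hu'
    · intro hu'
      have h2 : ((h⁻¹ : GL (Fin 2) (ZMod p)) : Matrix (Fin 2) (Fin 2) (ZMod p)) * M *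
          (((h⁻¹)⁻¹ : GL (Fin 2) (ZMod p)) : Matrix (Fin 2) (Fin 2) (ZMod p))
          = ((lu⁻¹ : (ZMod p)ˣ) : ZMod p) • M := by
        rw [inv_inv]
        exact hmat2
      have := conj_mem h⁻¹ ((lu⁻¹ : (ZMod p)ˣ) : ZMod p) h2 (h * u' * h⁻¹) hu'
      rwa [show h⁻¹ * (h * u' * h⁻¹) * h⁻¹⁻¹ = u' by group] at this
  · intro hiff
    exact spanAlg_split hM hns (zmod_two_ne_zero hp) hc0
      (isSquare_of_iff_one hp hc0 (hPSL.symm.trans hiff))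
  · intro hiff
    exact ⟨A, spanAlg_isField hM (not_isSquare_of_iff_three hp hc0 (hPSL.symm.trans hiff)),
      spanAlg_card hM hns, rfl⟩

end Main
section PartB
open Matrix

lemma eq_of_card_two {G : Type*} [Group G] (h : Nat.card G = 2) {a b : G}
    (ha : a ≠ 1) (hb : b ≠ 1) : a = b := by
  obtain ⟨u, v, huv, hset⟩ := Nat.card_eq_two_iff.mp h
  have hmem : ∀ g : G, g = u ∨ g = v := fun g => by
    have : g ∈ ({u, v} : Set G) := by rw [hset]; trivial
    simpa using this
  rcases hmem 1 with h1 | h1 <;> rcases hmem a with h2 | h2 <;> rcases hmem b with h3 | h3 <;>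
    first
      | (exact absurd (h2.trans h1.symm) ha)
      | (exact absurd (h3.trans h1.symm) hb)
      | (exact h2.trans h3.symm)

noncomputable def chiGL (p : ℕ) [Fact p.Prime] : GL (Fin 2) (ZMod p) →* ℤˣ :=
  (quadraticChar (ZMod p)).toUnitHom.comp (Matrix.GeneralLinearGroup.det)

lemma chiGL_eq_one_iff {p : ℕ} [Fact p.Prime] (g : GL (Fin 2) (ZMod p)) :
    chiGL p g = 1 ↔ IsSquare ((g : Matrix (Fin 2) (Fin 2) (ZMod p)).det) := by
  have hdet0 : ((g : Matrix (Fin 2) (Fin 2) (ZMod p))).det ≠ 0 :=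
    ((Matrix.isUnit_iff_isUnit_det _).mp g.isUnit).ne_zero
  rw [Units.ext_iff]
  have hval : ((chiGL p g : ℤˣ) : ℤ)
      = quadraticChar (ZMod p) ((g : Matrix (Fin 2) (Fin 2) (ZMod p)).det) := by
    simp only [chiGL, MonoidHom.comp_apply, MulChar.coe_toUnitHom]
    congr 1
  rw [hval]
  exact quadraticChar_one_iff_isSquare hdet0

noncomputable def phiPGL (p : ℕ) [Fact p.Prime] : PGL2 p →* ℤˣ :=
  QuotientGroup.lift (scalarGL p) (chiGL p) (by
    rintro s ⟨w, rfl⟩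
    apply (chiGL_eq_one_iff _).mpr
    rw [det_scalarHom]
    exact ⟨(w : ZMod p), rfl⟩)

lemma phiPGL_proj {p : ℕ} [Fact p.Prime] (g : GL (Fin 2) (ZMod p)) :
    phiPGL p (projGL p g) = chiGL p g := rfl

lemma mem_PSL2_iff_phi {p : ℕ} [Fact p.Prime] (x : PGL2 p) :
    x ∈ PSL2 p ↔ phiPGL p x = 1 := by
  obtain ⟨g, hg0⟩ := QuotientGroup.mk'_surjective (scalarGL p) x
  have hg : projGL p g = x := hg0
  rw [← hg, phiPGL_proj, mem_PSL2_iff, chiGL_eq_one_iff]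

end PartB

theorem klein_four_in_pgl2 (p : ℕ) [Fact p.Prime] (hp : Odd p) (N : Subgroup (PGL2 p))
    (hN : Nonempty (↥N ≃* Multiplicative (ZMod 2) × Multiplicative (ZMod 2))) :
    (N ≤ PSL2 p →
      ∀ x ∈ N, orderOf x = 2 →
        ∃ C : Subgroup (GL (Fin 2) (ZMod p)), IsCartan p C ∧
          (p % 4 = 1 → IsSplitCartan p C) ∧ (p % 4 = 3 → IsNonsplitCartan p C) ∧
          x ∈ Subgroup.map (projGL p) C ∧ N ≤ Subgroup.map (projGL p) (Subgroup.normalizer (C : Set (GL (Fin 2) (ZMod p))))) ∧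
    (¬ N ≤ PSL2 p →
      ∃ x ∈ N, orderOf x = 2 ∧ x ∈ PSL2 p ∧
        (∀ y ∈ N, orderOf y = 2 → y ∈ PSL2 p → y = x) ∧
        (p % 4 = 1 →
          (∃ C : Subgroup (GL (Fin 2) (ZMod p)), IsSplitCartan p C ∧
            x ∈ Subgroup.map (projGL p) C) ∧
          (∀ y ∈ N, orderOf y = 2 → y ≠ x →
            ∃ C : Subgroup (GL (Fin 2) (ZMod p)), IsNonsplitCartan p C ∧
              y ∈ Subgroup.map (projGL p) C)) ∧
        (p % 4 = 3 →
          (∃ C : Subgroup (GL (Fin 2) (ZMod p)), IsNonsplitCartan p C ∧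
            x ∈ Subgroup.map (projGL p) C) ∧
          (∀ y ∈ N, orderOf y = 2 → y ≠ x →
            ∃ C : Subgroup (GL (Fin 2) (ZMod p)), IsSplitCartan p C ∧
              y ∈ Subgroup.map (projGL p) C))) := by
  obtain ⟨e⟩ := hN
  have habelian : ∀ a b : N, a * b = b * a := fun a b => e.injective (by
    rw [_root_.map_mul, _root_.map_mul, mul_comm])
  have hsq1 : ∀ z : N, z ^ 2 = 1 := fun z => e.injective (by
    rw [_root_.map_pow, _root_.map_one]
    exact (by decide : ∀ k : Multiplicative (ZMod 2) × Multiplicative (ZMod 2), k ^ 2 = 1) (e z))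
  constructor
  · -- part (a)
    intro hle x hxN hx
    obtain ⟨C, hmem, hnorm, hsplit, hnonsplit⟩ := cartan_main p hp x hx
    have hx_psl : x ∈ PSL2 p := hle hxN
    have hNnorm : N ≤ Subgroup.map (projGL p) (Subgroup.normalizer (C : Set (GL (Fin 2) (ZMod p)))) := by
      intro y hyN
      apply hnorm
      have := habelian ⟨x, hxN⟩ ⟨y, hyN⟩
      exact congrArg Subtype.val this
    rcases mod4_cases (p := p) hp with h4 | h4
    · have hS := hsplit (iff_of_true hx_psl h4)
      exact ⟨C, Or.inl hS, fun _ => hS, fun h3 => absurd h4 (by omega), hmem, hNnorm⟩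
    · have hS := hnonsplit (iff_of_true hx_psl h4)
      exact ⟨C, Or.inr hS, fun h1 => absurd h4 (by omega), fun _ => hS, hmem, hNnorm⟩
  · -- part (b)
    intro hnle
    set f : N →* ℤˣ := (phiPGL p).comp N.subtype with hf_def
    have hker_iff : ∀ z : N, z ∈ f.ker ↔ (z : PGL2 p) ∈ PSL2 p := fun z => by
      rw [MonoidHom.mem_ker, hf_def, MonoidHom.comp_apply, mem_PSL2_iff_phi]
      rfl
    have hcardN : Nat.card N = 4 := by
      rw [Nat.card_congr e.toEquiv, Nat.card_eq_fintype_card]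
      decide
    have hrange : f.range = ⊤ := by
      obtain ⟨y, hyN, hy⟩ := SetLike.not_le_iff_exists.mp hnle
      have hfz : f ⟨y, hyN⟩ = -1 := by
        rcases Int.units_eq_one_or (f ⟨y, hyN⟩) with h | h
        · exact absurd ((hker_iff ⟨y, hyN⟩).mp h) hy
        · exact h
      apply (Subgroup.eq_top_iff' f.range).mpr
      intro w
      rcases Int.units_eq_one_or w with rfl | rfl
      · exact one_mem _
      · exact ⟨⟨y, hyN⟩, hfz⟩
    have hcard_range : Nat.card f.range = 2 := by
      have htop : Nat.card (⊤ : Subgroup ℤˣ) = Nat.card ℤˣ :=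
        Nat.card_congr Subgroup.topEquiv.toEquiv
      rw [hrange, htop]
      simp [Nat.card_eq_fintype_card]
    have hcard_ker : Nat.card f.ker = 2 := by
      have h1 := Subgroup.card_eq_card_quotient_mul_card_subgroup f.ker
      have h2 : Nat.card (N ⧸ f.ker) = Nat.card f.range :=
        Nat.card_congr (QuotientGroup.quotientKerEquivRange f).toEquiv
      rw [hcardN, h2, hcard_range] at h1
      omega
    have : Nontrivial f.ker := by
      have hfin : Finite f.ker := Nat.finite_of_card_ne_zero (by omega)
      exact Finite.one_lt_card_iff_nontrivial.mp (by omega)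
    obtain ⟨z₀, hz₀⟩ := exists_ne (1 : f.ker)
    set zN : N := (z₀ : N) with hzN_def
    set x : PGL2 p := (zN : PGL2 p) with hx_def
    have hzN1 : zN ≠ 1 := by
      intro h
      exact hz₀ (Subtype.ext h)
    have hx1 : x ≠ 1 := by
      intro h
      exact hzN1 (Subtype.ext h)
    have hxsq : x ^ 2 = 1 := by
      have := hsq1 zN
      have := congrArg (Subtype.val : N → PGL2 p) this
      simpa using this
    have hxord : orderOf x = 2 := orderOf_eq_prime hxsq hx1
    have hxPSL : x ∈ PSL2 p := (hker_iff zN).mp z₀.2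
    have huniq : ∀ y ∈ N, orderOf y = 2 → y ∈ PSL2 p → y = x := by
      intro y hyN hyord hyPSL
      have hy1 : y ≠ 1 := by
        intro h
        rw [h, orderOf_one] at hyord
        omega
      have hyker : (⟨y, hyN⟩ : N) ∈ f.ker := (hker_iff ⟨y, hyN⟩).mpr hyPSL
      have : (⟨⟨y, hyN⟩, hyker⟩ : f.ker) = z₀ := by
        apply eq_of_card_two hcard_ker
        · intro h
          exact hy1 (congrArg (fun w : f.ker => ((w : N) : PGL2 p)) h)
        · exact hz₀
      exact congrArg (fun w : f.ker => ((w : N) : PGL2 p)) this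
    have hother : ∀ y ∈ N, orderOf y = 2 → y ≠ x → y ∉ PSL2 p := by
      intro y hyN hyord hyx hyPSL
      exact hyx (huniq y hyN hyord hyPSL)
    refine ⟨x, zN.2, hxord, hxPSL, huniq, ?_, ?_⟩
    · intro h4
      obtain ⟨C, hmem, _, hsplit, _⟩ := cartan_main p hp x hxord
      refine ⟨⟨C, hsplit (iff_of_true hxPSL h4), hmem⟩, ?_⟩
      intro y hyN hyord hyx
      obtain ⟨C', hmem', _, _, hnonsplit'⟩ := cartan_main p hp y hyord
      exact ⟨C', hnonsplit' (iff_of_false (hother y hyN hyord hyx) (by omega)), hmem'⟩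
    · intro h4
      obtain ⟨C, hmem, _, _, hnonsplit⟩ := cartan_main p hp x hxord
      refine ⟨⟨C, hnonsplit (iff_of_true hxPSL h4), hmem⟩, ?_⟩
      intro y hyN hyord hyx
      obtain ⟨C', hmem', _, hsplit', _⟩ := cartan_main p hp y hyord
      exact ⟨C', hsplit' (iff_of_false (hother y hyN hyord hyx) (by omega)), hmem'⟩
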